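/- arXiv:1911.09406 — 4 statements merged into one kernel-verified Lean document; each statement's English description precedes it below -/
import Mathlib

section
/- Let f_n be a sequence of rational maps of degree d ≥ 1 on the Riemann sphere that converges semi-algebraically to a degenerate rational map f = H_f · f̂, where H_f is the gcd factor and f̂ is the reduction of f. Then f_n converges locally uniformly to f̂ on the complement of the (finite) set of holes of f (the zeros of H_f). -/
open Polynomial Filter

lemma aux_sum (s : Set ℂ) (m : ℕ) (F : ℕ → ℕ → ℂ → ℂ) (G : ℕ → ℂ → ℂ)
    (h : ∀ k, TendstoUniformlyOn (F k) (G k) atTop s) :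
    TendstoUniformlyOn (fun n w => ∑ k ∈ Finset.range m, F k n w)
      (fun w => ∑ k ∈ Finset.range m, G k w) atTop s := by
  induction m with
  | zero => simpa using (tendsto_const_nhds : Tendsto (fun _ : ℕ => (0:ℂ)) atTop (nhds 0)).tendstoUniformlyOn_const (s := s)
  | succ m ih =>
    simp only [Finset.sum_range_succ]
    exact ih.add (h m)

lemma aux_constmul (s : Set ℂ) (R : ℝ) (g : ℂ → ℂ) (hg : ∀ w ∈ s, ‖g w‖ ≤ R)
    (cn : ℕ → ℂ) (cl : ℂ) (h : Tendsto cn atTop (nhds cl)) :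
    TendstoUniformlyOn (fun n w => cn n * g w) (fun w => cl * g w) atTop s := by
  rw [Metric.tendstoUniformlyOn_iff]
  intro ε hε
  have hM : (0:ℝ) < max R 0 + 1 := by positivity
  have hδ : (0:ℝ) < ε / (max R 0 + 1) := by positivity
  filter_upwards [Metric.tendsto_nhds.mp h _ hδ] with n hn w hw
  have h1 : ‖g w‖ ≤ max R 0 + 1 := le_trans (le_trans (hg w hw) (le_max_left _ _)) (by linarith)
  have h2 : ‖cn n - cl‖ < ε / (max R 0 + 1) := by
    rw [← dist_eq_norm]; exact hn
  calc dist (cl * g w) (cn n * g w) = ‖cn n - cl‖ * ‖g w‖ := by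
        rw [dist_eq_norm, ← norm_neg, ← norm_mul]; ring_nf
  _ ≤ ‖cn n - cl‖ * (max R 0 + 1) := by gcongr
  _ < (ε / (max R 0 + 1)) * (max R 0 + 1) := by gcongr
  _ = ε := div_mul_cancel₀ _ (ne_of_gt hM)

lemma aux_polyconv (d : ℕ) (a : ℕ → ℂ[X]) (b : ℂ[X])
    (hda : ∀ n, (a n).natDegree ≤ d) (hdb : b.natDegree ≤ d)
    (cc : ℕ → ℂ) (hconv : ∀ k, Tendsto (fun n => cc n * (a n).coeff k) atTop (nhds (b.coeff k)))
    (s : Set ℂ) (R : ℝ) (hs : ∀ w ∈ s, ‖w‖ ≤ R) :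
    TendstoUniformlyOn (fun n w => cc n * (a n).eval w) (fun w => b.eval w) atTop s := by
  have key : TendstoUniformlyOn
      (fun n w => ∑ k ∈ Finset.range (d+1), (cc n * (a n).coeff k) * w ^ k)
      (fun w => ∑ k ∈ Finset.range (d+1), b.coeff k * w ^ k) atTop s := by
    apply aux_sum
    intro k
    apply aux_constmul s (max R 0 ^ k) (fun w => w ^ k)
    · intro w hw
      rw [norm_pow]
      exact pow_le_pow_left₀ (norm_nonneg _) (le_trans (hs w hw) (le_max_left _ _)) k
    · exact hconv k
  have e1 : ∀ n (w : ℂ), cc n * (a n).eval w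
      = ∑ k ∈ Finset.range (d+1), (cc n * (a n).coeff k) * w ^ k := by
    intro n w
    rw [eval_eq_sum_range' (Nat.lt_succ_of_le (hda n)), Finset.mul_sum]
    congr 1; ext k; ring
  have e2 : ∀ (w : ℂ), b.eval w = ∑ k ∈ Finset.range (d+1), b.coeff k * w ^ k :=
    fun w => eval_eq_sum_range' (Nat.lt_succ_of_le hdb) w
  simpa only [← e1, ← e2] using key

lemma aux_div (s : Set ℂ) (fn gn : ℕ → ℂ → ℂ) (f g : ℂ → ℂ) (M ε0 : ℝ)
    (hM : 0 < M) (hε0 : 0 < ε0)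
    (hfM : ∀ w ∈ s, ‖f w‖ ≤ M)
    (hgl : ∀ w ∈ s, ε0 ≤ ‖g w‖)
    (h1 : TendstoUniformlyOn fn f atTop s) (h2 : TendstoUniformlyOn gn g atTop s) :
    TendstoUniformlyOn (fun n w => fn n w / gn n w) (fun w => f w / g w) atTop s := by
  rw [Metric.tendstoUniformlyOn_iff] at h1 h2 ⊢
  intro ε hε
  set δ : ℝ := min (ε0/2) (ε * ε0 * ε0 / (4 * (ε0 + M))) with hδdef
  have hδpos : 0 < δ := lt_min (by positivity) (by positivity)
  have hδ1 : δ ≤ ε0 / 2 := min_le_left _ _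
  have hδ2 : δ ≤ ε * ε0 * ε0 / (4 * (ε0 + M)) := min_le_right _ _
  filter_upwards [h1 δ hδpos, h2 δ hδpos] with n hn1 hn2 w hw
  have hgw : ε0 ≤ ‖g w‖ := hgl w hw
  have hfw : ‖f w‖ ≤ M := hfM w hw
  have hd1 : ‖f w - fn n w‖ < δ := by rw [← dist_eq_norm]; exact hn1 w hw
  have hd2 : ‖g w - gn n w‖ < δ := by rw [← dist_eq_norm]; exact hn2 w hw
  have hgn : ε0 / 2 ≤ ‖gn n w‖ := by
    have := norm_sub_norm_le (g w) (gn n w)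
    linarith
  have hgne : gn n w ≠ 0 := by
    intro h0; rw [h0, norm_zero] at hgn; linarith
  have hge : g w ≠ 0 := by
    intro h0; rw [h0, norm_zero] at hgw; linarith
  calc dist (f w / g w) (fn n w / gn n w)
      = ‖(f w - fn n w)/gn n w + f w * (gn n w - g w)/(g w * gn n w)‖ := by
        rw [dist_eq_norm]; congr 1; field_simp; ring
    _ ≤ ‖(f w - fn n w)/gn n w‖ + ‖f w * (gn n w - g w)/(g w * gn n w)‖ := norm_add_le _ _
    _ = ‖f w - fn n w‖/‖gn n w‖ + ‖f w‖ * ‖gn n w - g w‖/(‖g w‖ * ‖gn n w‖) := by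
        rw [norm_div, norm_div, norm_mul, norm_mul]
    _ ≤ δ/(ε0/2) + M * δ/(ε0 * (ε0/2)) := by
        have hgn' : ‖gn n w - g w‖ ≤ δ := by rw [norm_sub_rev]; exact le_of_lt hd2
        gcongr
    _ = δ * (2 * (ε0 + M))/(ε0 * ε0) := by field_simp
    _ ≤ (ε * ε0 * ε0 / (4 * (ε0 + M))) * (2 * (ε0 + M))/(ε0 * ε0) := by gcongr
    _ = ε / 2 := by field_simp; ring
    _ < ε := by linarith

lemma aux_main (d : ℕ) (An Bn : ℕ → ℂ[X])
    (hdegA : ∀ n, (An n).natDegree ≤ d) (hdegB : ∀ n, (Bn n).natDegree ≤ d)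
    (A B : ℂ[X]) (hdA : A.natDegree ≤ d) (hdB : B.natDegree ≤ d)
    (c : ℕ → ℂ)
    (hconvA : ∀ k, Tendsto (fun n => c n * (An n).coeff k) atTop (nhds (A.coeff k)))
    (hconvB : ∀ k, Tendsto (fun n => c n * (Bn n).coeff k) atTop (nhds (B.coeff k)))
    (z : ℂ) (hz : B.eval z ≠ 0) :
    ∃ U ∈ nhds z, (∀ w ∈ U, B.eval w ≠ 0) ∧
      TendstoUniformlyOn (fun n w => c n * (An n).eval w / (c n * (Bn n).eval w))
        (fun w => A.eval w / B.eval w) atTop U := by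
  set ε0 : ℝ := ‖B.eval z‖ / 2 with hε0def
  have hε0 : 0 < ε0 := by
    have : 0 < ‖B.eval z‖ := norm_pos_iff.mpr hz
    positivity
  have hopen : IsOpen {w : ℂ | ε0 < ‖B.eval w‖} :=
    isOpen_lt continuous_const (Polynomial.continuous B).norm
  have hmem : z ∈ {w : ℂ | ε0 < ‖B.eval w‖} := by
    simp only [Set.mem_setOf_eq, hε0def]
    exact half_lt_self (norm_pos_iff.mpr hz)
  obtain ⟨r, hr, hball⟩ := Metric.mem_nhds_iff.mp (hopen.mem_nhds hmem)
  set U : Set ℂ := Metric.closedBall z (r/2) with hUdef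
  have hUnhds : U ∈ nhds z := Metric.closedBall_mem_nhds z (by positivity)
  have hUsub : U ⊆ {w : ℂ | ε0 < ‖B.eval w‖} :=
    (Metric.closedBall_subset_ball (by linarith)).trans hball
  have hlow : ∀ w ∈ U, ε0 ≤ ‖B.eval w‖ := fun w hw => le_of_lt (hUsub hw)
  have hne : ∀ w ∈ U, B.eval w ≠ 0 := by
    intro w hw h0
    have := hUsub hw
    rw [Set.mem_setOf_eq, h0, norm_zero] at this
    linarith
  obtain ⟨M0, hM0⟩ := (isCompact_closedBall z (r/2)).exists_bound_of_continuousOn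
    (Polynomial.continuous A).continuousOn
  have hRb : ∀ w ∈ U, ‖w‖ ≤ ‖z‖ + r := by
    intro w hw
    have hd : dist w z ≤ r/2 := Metric.mem_closedBall.mp hw
    calc ‖w‖ = ‖z + (w - z)‖ := by ring_nf
    _ ≤ ‖z‖ + ‖w - z‖ := norm_add_le _ _
    _ ≤ ‖z‖ + r := by rw [← dist_eq_norm] at *; linarith [dist_comm w z ▸ hd]
  have hA := aux_polyconv d An A hdegA hdA c hconvA U (‖z‖ + r) hRb
  have hB := aux_polyconv d Bn B hdegB hdB c hconvB U (‖z‖ + r) hRb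
  refine ⟨U, hUnhds, hne, ?_⟩
  exact aux_div U _ _ _ _ (max M0 1) ε0 (lt_of_lt_of_le one_pos (le_max_right _ _)) hε0
    (fun w hw => le_trans (hM0 w hw) (le_max_left _ _)) hlow hA hB

/-- If degree-`d` rational maps `P_n/Q_n` converge semi-algebraically (coefficientwise, up to
scalars) to the degenerate rational map `f = H·(P̂/Q̂)` with reduction `f̂ = P̂/Q̂` and holes
the zeros of `H`, then `P_n/Q_n → f̂` locally uniformly (in the spherical sense, i.e. in the
appropriate chart) away from the holes of `f`. -/
theorem stmt8 (d : ℕ) (hd : 1 ≤ d)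
    (Pn Qn : ℕ → ℂ[X])
    (hdegn : ∀ n, max (Pn n).natDegree (Qn n).natDegree = d)
    (hcopn : ∀ n, IsCoprime (Pn n) (Qn n))
    (H Phat Qhat : ℂ[X]) (hcop : IsCoprime Phat Qhat) (hH : H ≠ 0)
    (hdeg : H.natDegree + max Phat.natDegree Qhat.natDegree = d)
    (c : ℕ → ℂ) (hc : ∀ n, c n ≠ 0)
    (hconvP : ∀ k, Tendsto (fun n => c n * (Pn n).coeff k) atTop (nhds ((H * Phat).coeff k)))
    (hconvQ : ∀ k, Tendsto (fun n => c n * (Qn n).coeff k) atTop (nhds ((H * Qhat).coeff k))) :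
    ∀ z : ℂ, H.eval z ≠ 0 →
      ∃ U ∈ nhds z,
        (Qhat.eval z ≠ 0 →
          TendstoUniformlyOn (fun n w => (Pn n).eval w / (Qn n).eval w)
            (fun w => Phat.eval w / Qhat.eval w) atTop U) ∧
        (Qhat.eval z = 0 →
          TendstoUniformlyOn (fun n w => (Qn n).eval w / (Pn n).eval w)
            (fun w => Qhat.eval w / Phat.eval w) atTop U) := by
  intro z hz
  have hPd : ∀ n, (Pn n).natDegree ≤ d := fun n => (hdegn n) ▸ le_max_left _ _
  have hQd : ∀ n, (Qn n).natDegree ≤ d := fun n => (hdegn n) ▸ le_max_right _ _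
  have hHP : (H * Phat).natDegree ≤ d :=
    natDegree_mul_le.trans (by rw [← hdeg]; gcongr; exact le_max_left _ _)
  have hHQ : (H * Qhat).natDegree ≤ d :=
    natDegree_mul_le.trans (by rw [← hdeg]; gcongr; exact le_max_right _ _)
  by_cases hQz : Qhat.eval z = 0
  · have hPz : Phat.eval z ≠ 0 := by
      intro h0
      obtain ⟨u, v, huv⟩ := hcop
      have h1 := congrArg (fun p => Polynomial.eval z p) huv
      simp [h0, hQz] at h1
    obtain ⟨U, hU, hne, hconv⟩ := aux_main d Qn Pn hQd hPd (H * Qhat) (H * Phat) hHQ hHP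
      c hconvQ hconvP z (by rw [eval_mul]; exact mul_ne_zero hz hPz)
    refine ⟨U, hU, fun h => absurd hQz h, fun _ => ?_⟩
    refine (hconv.congr ?_).congr_right ?_
    · filter_upwards with n w hw
      exact mul_div_mul_left _ _ (hc n)
    · intro w hw
      have hHw : H.eval w ≠ 0 := by
        intro h0
        exact hne w hw (by rw [eval_mul, h0, zero_mul])
      show (H * Qhat).eval w / (H * Phat).eval w = Qhat.eval w / Phat.eval w
      rw [eval_mul, eval_mul]
      exact mul_div_mul_left _ _ hHw
  · obtain ⟨U, hU, hne, hconv⟩ := aux_main d Pn Qn hPd hQd (H * Phat) (H * Qhat) hHP hHQ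
      c hconvP hconvQ z (by rw [eval_mul]; exact mul_ne_zero hz hQz)
    refine ⟨U, hU, fun _ => ?_, fun h => absurd h hQz⟩
    refine (hconv.congr ?_).congr_right ?_
    · filter_upwards with n w hw
      exact mul_div_mul_left _ _ (hc n)
    · intro w hw
      have hHw : H.eval w ≠ 0 := by
        intro h0
        exact hne w hw (by rw [eval_mul, h0, zero_mul])
      show (H * Phat).eval w / (H * Qhat).eval w = Phat.eval w / Qhat.eval w
      rw [eval_mul, eval_mul]
      exact mul_div_mul_left _ _ hHw
end

section
/- A rational map ĝ of degree d ≥ 2 on the Riemann sphere is the Newton map of some complex polynomial Q of degree ≥ d (equivalently, a reduction of a possibly degenerate Newton map of degree at least d) if and only if ĝ has d+1 distinct fixed points r_1, …, r_d, ∞ such that the multiplier of ĝ at each r_i equals 1 - 1/n_i for some positive integer n_i. -/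
open Polynomial

private lemma deriv_eval_div (A B : ℂ[X]) (r : ℂ) (hB : B.eval r ≠ 0) :
    deriv (fun z => A.eval z / B.eval z) r =
      (A.derivative.eval r * B.eval r - A.eval r * B.derivative.eval r) / (B.eval r) ^ 2 := by
  rw [deriv_fun_div A.differentiableAt B.differentiableAt hB, Polynomial.deriv, Polynomial.deriv]

private lemma nd_deriv (p : ℂ[X]) (hp : 1 ≤ p.natDegree) :
    p.derivative.natDegree = p.natDegree - 1 ∧ p.derivative ≠ 0 := by
  have h := degree_derivative_eq p hp
  constructor
  · exact natDegree_eq_of_degree_eq_some h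
  · intro h0
    rw [h0, degree_zero] at h
    exact (WithBot.bot_ne_coe (a := p.natDegree - 1)) h

private lemma forward_dir (d : ℕ) (hd : 2 ≤ d) (A B : ℂ[X]) (hcop : IsCoprime A B)
    (hdeg : max A.natDegree B.natDegree = d) (Q : ℂ[X]) (hdQ : d ≤ Q.natDegree)
    (hpt : ∀ z : ℂ, B.eval z ≠ 0 → Q.derivative.eval z ≠ 0 →
          A.eval z / B.eval z = z - Q.eval z / Q.derivative.eval z) :
    B.natDegree < A.natDegree ∧
      ∃ (r : Fin d → ℂ) (m : Fin d → ℕ+), Function.Injective r ∧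
        ∀ i, B.eval (r i) ≠ 0 ∧ A.eval (r i) / B.eval (r i) = r i ∧
          deriv (fun z => A.eval z / B.eval z) (r i) = 1 - 1 / ((m i : ℕ) : ℂ) := by
  have hn2 : 2 ≤ Q.natDegree := le_trans hd hdQ
  have hQ0 : Q ≠ 0 := fun h => by simp [h] at hn2
  obtain ⟨hndQ', hQ'0⟩ := nd_deriv Q (by omega)
  have hB0 : B ≠ 0 := by
    rintro rfl
    have := natDegree_eq_zero_of_isUnit (isCoprime_zero_right.mp hcop)
    simp [this] at hdeg; omega
  have hA0 : A ≠ 0 := by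
    rintro rfl
    have := natDegree_eq_zero_of_isUnit (isCoprime_zero_left.mp hcop)
    simp [this] at hdeg; omega
  -- polynomial identity
  have hkey : A * Q.derivative = B * (X * Q.derivative - Q) := by
    apply eq_of_infinite_eval_eq
    apply Set.Infinite.mono (s := ({x | B.IsRoot x} ∪ {x | Q.derivative.IsRoot x})ᶜ)
    · intro z hz
      simp only [Set.mem_compl_iff, Set.mem_union, Set.mem_setOf_eq, IsRoot.def, not_or] at hz
      obtain ⟨hBz, hQ'z⟩ := hz
      have h := hpt z hBz hQ'z
      simp only [Set.mem_setOf_eq, eval_mul, eval_sub, eval_X]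
      field_simp at h
      linear_combination h
    · exact Set.Finite.infinite_compl
        ((finite_setOf_isRoot hB0).union (finite_setOf_isRoot hQ'0))
  have hBdvd : B ∣ Q.derivative :=
    hcop.symm.dvd_of_dvd_mul_left ⟨X * Q.derivative - Q, hkey⟩
  obtain ⟨K, hK⟩ := hBdvd
  have hK0 : K ≠ 0 := by rintro rfl; rw [mul_zero] at hK; exact hQ'0 hK
  set P : ℂ[X] := X * B - A with hPdef
  have hQPK : Q = P * K := by
    have h3 : B * (A * K) = B * (X * (B * K) - Q) := by
      rw [hK] at hkey; linear_combination hkey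
    have h4 := mul_left_cancel₀ hB0 h3
    rw [hPdef]; linear_combination h4
  have hP0 : P ≠ 0 := fun h => hQ0 (by rw [hQPK, h, zero_mul])
  have hXQ'Q : X * Q.derivative - Q = A * K := by rw [hK, hQPK, hPdef]; ring
  -- degrees
  have e1 : B.natDegree + K.natDegree = Q.natDegree - 1 := by
    rw [← hndQ', hK, natDegree_mul hB0 hK0]
  have e2 : P.natDegree + K.natDegree = Q.natDegree := by
    rw [hQPK, natDegree_mul hP0 hK0]
  obtain ⟨k, hk⟩ : ∃ k, Q.natDegree = k + 2 := ⟨Q.natDegree - 2, by omega⟩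
  have e3 : (X * Q.derivative - Q).natDegree = Q.natDegree := by
    apply le_antisymm
    · apply (natDegree_sub_le _ _).trans
      have : (X * Q.derivative).natDegree ≤ Q.natDegree := by
        rw [natDegree_mul X_ne_zero hQ'0, natDegree_X]; omega
      omega
    · apply le_natDegree_of_ne_zero
      rw [hk, coeff_sub]
      have hc1 : (X * derivative Q).coeff (k + 2) = (derivative Q).coeff (k + 1) := by
        simpa using coeff_X_mul (derivative Q) (k + 1)
      rw [hc1, coeff_derivative]
      have hlc : Q.coeff (k + 2) ≠ 0 := by
        rw [← hk, ← leadingCoeff]; exact leadingCoeff_ne_zero.mpr hQ0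
      intro hcon
      apply hlc
      have h5 : Q.coeff (k + 2) * ((k : ℂ) + 1) = 0 := by
        push_cast at hcon ⊢; linear_combination hcon
      rcases mul_eq_zero.mp h5 with h | h
      · exact h
      · exact absurd h (Nat.cast_add_one_ne_zero k)
  have e4 : A.natDegree + K.natDegree = Q.natDegree := by
    rw [← e3, hXQ'Q, natDegree_mul hA0 hK0]
  have hBA : B.natDegree < A.natDegree := by omega
  have hAd : A.natDegree = d := by rw [max_eq_left hBA.le] at hdeg; exact hdeg
  have hPd : P.natDegree = d := by omega
  -- every root of P is simple and not a root of B
  have hroot : ∀ z : ℂ, P.IsRoot z → B.eval z ≠ 0 ∧ rootMultiplicity z P = 1 := by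
    intro z hz
    have hz' : P.eval z = 0 := hz
    have hBz : B.eval z ≠ 0 := by
      intro h0
      have hAz : A.eval z = 0 := by
        have h6 : z * B.eval z - A.eval z = 0 := by simpa [hPdef] using hz'
        rw [h0] at h6; linear_combination -h6
      obtain ⟨u, v, huv⟩ := hcop
      have h7 := congrArg (eval z) huv
      simp [hAz, h0] at h7
    have hQz : Q.IsRoot z := by simp [hQPK, IsRoot.def, hz']
    have hmulQ : rootMultiplicity z Q = rootMultiplicity z P + rootMultiplicity z K := by
      rw [hQPK]; exact rootMultiplicity_mul (mul_ne_zero hP0 hK0)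
    have hmulQ' : rootMultiplicity z (derivative Q) = rootMultiplicity z K := by
      rw [hK, rootMultiplicity_mul (mul_ne_zero hB0 hK0),
        rootMultiplicity_eq_zero (by simpa [IsRoot.def] using hBz), zero_add]
    have hder := derivative_rootMultiplicity_of_root hQz
    have hppos : 0 < rootMultiplicity z P := (rootMultiplicity_pos hP0).2 hz
    have hqpos : 0 < rootMultiplicity z Q := (rootMultiplicity_pos hQ0).2 hQz
    exact ⟨hBz, by omega⟩
  -- per-root facts
  have hmain : ∀ z : ℂ, P.IsRoot z → B.eval z ≠ 0 ∧ A.eval z / B.eval z = z ∧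
      deriv (fun w => A.eval w / B.eval w) z = 1 - 1 / ((rootMultiplicity z Q : ℕ) : ℂ) := by
    intro z hz
    obtain ⟨hBz, hPm⟩ := hroot z hz
    have hz' : P.eval z = 0 := hz
    have hAz : A.eval z = z * B.eval z := by
      have h6 : z * B.eval z - A.eval z = 0 := by simpa [hPdef] using hz'
      linear_combination -h6
    have hfix : A.eval z / B.eval z = z := by rw [hAz]; field_simp
    have hQz : Q.IsRoot z := by simp [hQPK, IsRoot.def, hz']
    set n := rootMultiplicity z Q with hn
    have hn1 : 1 ≤ n := (rootMultiplicity_pos hQ0).2 hQz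
    obtain ⟨n', hn'⟩ : ∃ n', n = n' + 1 := ⟨n - 1, by omega⟩
    have hKm : rootMultiplicity z K = n' := by
      have hmulQ : rootMultiplicity z Q = rootMultiplicity z P + rootMultiplicity z K := by
        rw [hQPK]; exact rootMultiplicity_mul (mul_ne_zero hP0 hK0)
      omega
    obtain ⟨U, hU, hUd⟩ := Q.exists_eq_pow_rootMultiplicity_mul_and_not_dvd hQ0 z
    obtain ⟨V, hV, hVd⟩ := K.exists_eq_pow_rootMultiplicity_mul_and_not_dvd hK0 z
    obtain ⟨W, hW, hWd⟩ := P.exists_eq_pow_rootMultiplicity_mul_and_not_dvd hP0 z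
    rw [hKm] at hV
    rw [hPm, pow_one] at hW
    rw [← hn] at hU
    have hUz : U.eval z ≠ 0 := fun h => hUd (dvd_iff_isRoot.mpr h)
    have hVz : V.eval z ≠ 0 := fun h => hVd (dvd_iff_isRoot.mpr h)
    have hWz : W.eval z ≠ 0 := fun h => hWd (dvd_iff_isRoot.mpr h)
    have hUV : U = W * V := by
      have h8 : (X - C z) ^ n * U = (X - C z) ^ n * (W * V) := by
        rw [← hU, hQPK, hW, hV, hn']; ring
      exact mul_left_cancel₀ (pow_ne_zero _ (X_sub_C_ne_zero z)) h8
    have hQ'exp : derivative Q =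
        (X - C z) ^ n' * (C ((n : ℕ) : ℂ) * U + (X - C z) * derivative U) := by
      rw [hU, derivative_mul, derivative_pow, derivative_sub, derivative_X, derivative_C, hn']
      simp only [Nat.add_sub_cancel]
      push_cast
      ring
    have hBV : B * V = C ((n : ℕ) : ℂ) * U + (X - C z) * derivative U := by
      have h7 : (X - C z) ^ n' * (B * V) =
          (X - C z) ^ n' * (C ((n : ℕ) : ℂ) * U + (X - C z) * derivative U) := by
        rw [← hQ'exp, hK, hV]; ring
      exact mul_left_cancel₀ (pow_ne_zero _ (X_sub_C_ne_zero z)) h7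
    have hBW : B.eval z = ((n : ℕ) : ℂ) * W.eval z := by
      apply mul_right_cancel₀ hVz
      have h9 := congrArg (eval z) hBV
      simp only [eval_mul, eval_add, eval_sub, eval_X, eval_C, hUV] at h9
      linear_combination h9
    have hP'z : P.derivative.eval z = W.eval z := by
      rw [hW]
      simp [derivative_mul, derivative_sub]
    have hA'z : A.derivative.eval z = B.eval z + z * B.derivative.eval z - P.derivative.eval z := by
      have hA : A = X * B - P := by rw [hPdef]; ring
      rw [hA, derivative_sub, derivative_mul, derivative_X]
      simp
    refine ⟨hBz, hfix, ?_⟩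
    rw [deriv_eval_div A B z hBz, hA'z, hAz, hP'z, hBW]
    have hnz : ((n : ℕ) : ℂ) ≠ 0 := Nat.cast_ne_zero.mpr (by omega)
    field_simp
    ring
  -- enumerate the roots of P
  have hsplits : P.Splits := IsAlgClosed.splits P
  have hcard : Multiset.card P.roots = d := by
    have h := hsplits.natDegree_eq_card_roots
    rw [hPd] at h
    exact h.symm
  have hnodup : P.roots.Nodup := by
    rw [Multiset.nodup_iff_count_le_one]
    intro a
    classical
    rw [count_roots]
    by_cases ha : P.IsRoot a
    · rw [(hroot a ha).2]
    · rw [rootMultiplicity_eq_zero ha]; omega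
  have htf : P.roots.toFinset.card = d := by
    rw [Multiset.toFinset_card_of_nodup hnodup, hcard]
  let e : Fin d ≃ {x // x ∈ P.roots.toFinset} := (Finset.equivFinOfCardEq htf).symm
  have hmem : ∀ i : Fin d, P.IsRoot ((e i : ℂ)) := fun i => by
    have h := (e i).2
    rw [Multiset.mem_toFinset, mem_roots hP0] at h
    exact h
  have hQroot : ∀ i : Fin d, Q.IsRoot ((e i : ℂ)) := fun i => by
    have h : P.eval (e i : ℂ) = 0 := hmem i
    simp [hQPK, IsRoot.def, h]
  refine ⟨hBA, fun i => (e i : ℂ),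
    fun i => ⟨rootMultiplicity ((e i : ℂ)) Q, (rootMultiplicity_pos hQ0).2 (hQroot i)⟩,
    fun a b hab => e.injective (Subtype.ext hab), fun i => ?_⟩
  obtain ⟨h1, h2, h3⟩ := hmain (e i : ℂ) (hmem i)
  exact ⟨h1, h2, h3⟩


private lemma derivative_finset_prod {ι : Type*} [DecidableEq ι] (s : Finset ι) (f : ι → ℂ[X]) :
    derivative (∏ i ∈ s, f i) = ∑ i ∈ s, (∏ j ∈ s.erase i, f j) * derivative (f i) := by
  induction s using Finset.induction_on with
  | empty => simp
  | insert _ _ ha ih =>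
    rename_i a s
    rw [Finset.prod_insert ha, derivative_mul, ih, Finset.sum_insert ha, Finset.erase_insert ha,
      Finset.mul_sum]
    congr 1
    · exact mul_comm _ _
    · apply Finset.sum_congr rfl
      intro i hi
      have hia : i ≠ a := fun h => ha (h ▸ hi)
      rw [Finset.erase_insert_of_ne hia.symm,
        Finset.prod_insert (fun h => ha (Finset.mem_of_mem_erase h))]
      ring

private lemma backward_dir (d : ℕ) (hd : 2 ≤ d) (A B : ℂ[X]) (hcop : IsCoprime A B)
    (hdeg : max A.natDegree B.natDegree = d) (hBA : B.natDegree < A.natDegree)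
    (r : Fin d → ℂ) (m : Fin d → ℕ+) (hrinj : Function.Injective r)
    (hfix : ∀ i, B.eval (r i) ≠ 0 ∧ A.eval (r i) / B.eval (r i) = r i ∧
      deriv (fun z => A.eval z / B.eval z) (r i) = 1 - 1 / ((m i : ℕ) : ℂ)) :
    ∃ Q : ℂ[X], d ≤ Q.natDegree ∧
      ∀ z : ℂ, B.eval z ≠ 0 → Q.derivative.eval z ≠ 0 →
        A.eval z / B.eval z = z - Q.eval z / Q.derivative.eval z := by
  classical
  have hAd : A.natDegree = d := by rw [max_eq_left hBA.le] at hdeg; exact hdeg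
  have hA0 : A ≠ 0 := fun h => by simp [h] at hAd; omega
  have hB0 : B ≠ 0 := by
    rintro rfl
    have := natDegree_eq_zero_of_isUnit (isCoprime_zero_right.mp hcop)
    omega
  set P : ℂ[X] := A - X * B with hPdef
  have hPr : ∀ i, P.eval (r i) = 0 := by
    intro i
    obtain ⟨hBi, hfixi, -⟩ := hfix i
    have hAi : A.eval (r i) = r i * B.eval (r i) := by
      field_simp at hfixi; linear_combination hfixi
    simp [hPdef, hAi]
  have hP0 : P ≠ 0 := by
    intro h
    have hAXB : A = X * B := by rw [hPdef] at h; linear_combination h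
    have hBu : IsUnit B := hcop.symm.isUnit_of_dvd ⟨X, by rw [hAXB]; ring⟩
    have hBd : B.natDegree = 0 := natDegree_eq_zero_of_isUnit hBu
    have : A.natDegree = 1 := by rw [hAXB, natDegree_mul X_ne_zero hB0, natDegree_X, hBd]
    omega
  have hPdle : P.natDegree ≤ d := by
    apply (natDegree_sub_le _ _).trans
    have h1 : (X * B).natDegree = 1 + B.natDegree := by
      rw [natDegree_mul X_ne_zero hB0, natDegree_X]
    omega
  set M : ℂ[X] := ∏ i : Fin d, (X - C (r i)) with hMdef
  have hMdvd : M ∣ P := by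
    apply Finset.prod_dvd_of_coprime
    · exact (pairwise_coprime_X_sub_C hrinj).set_pairwise _
    · intro i _
      exact dvd_iff_isRoot.mpr (hPr i)
  obtain ⟨T, hT⟩ := hMdvd
  have hM0 : M ≠ 0 := by
    apply Finset.prod_ne_zero_iff.mpr
    intro i _
    exact X_sub_C_ne_zero (r i)
  have hT0 : T ≠ 0 := fun h => hP0 (by rw [hT, h, mul_zero])
  have hMd : M.natDegree = d := by
    rw [hMdef, natDegree_prod _ _ fun i _ => X_sub_C_ne_zero (r i)]
    simp
  have hTd : T.natDegree = 0 := by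
    have := natDegree_mul hM0 hT0
    rw [← hT] at this
    omega
  set c : ℂ := T.coeff 0 with hcdef
  have hTc : T = C c := eq_C_of_natDegree_eq_zero hTd
  have hc0 : c ≠ 0 := fun h => hT0 (by rw [hTc, h, map_zero])
  have hPc : P = C c * M := by rw [hT, hTc]; ring
  -- the candidate polynomial
  set Q : ℂ[X] := ∏ i : Fin d, (X - C (r i)) ^ (m i : ℕ) with hQdef
  have hQfac : ∀ i : Fin d, (X - C (r i)) ^ (m i : ℕ) ≠ 0 :=
    fun i => pow_ne_zero _ (X_sub_C_ne_zero (r i))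
  have hQ0 : Q ≠ 0 := Finset.prod_ne_zero_iff.mpr fun i _ => hQfac i
  have hQd : d ≤ Q.natDegree := by
    rw [hQdef, natDegree_prod _ _ fun i _ => hQfac i]
    have h1 : ∀ i : Fin d, 1 ≤ ((X - C (r i)) ^ (m i : ℕ)).natDegree := by
      intro i
      rw [natDegree_pow, natDegree_X_sub_C, mul_one]
      exact (m i).pos
    have h2 := Finset.card_nsmul_le_sum Finset.univ
      (fun i : Fin d => ((X - C (r i)) ^ (m i : ℕ)).natDegree) 1 (fun i _ => h1 i)
    simpa using h2
  -- multiplier information: B(r i) = -(m i) * P'(r i)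
  have hBP' : ∀ i, B.eval (r i) = -(((m i : ℕ) : ℂ)) * P.derivative.eval (r i) := by
    intro i
    obtain ⟨hBi, hfixi, hderi⟩ := hfix i
    have hAi : A.eval (r i) = r i * B.eval (r i) := by
      field_simp at hfixi; linear_combination hfixi
    rw [deriv_eval_div A B (r i) hBi] at hderi
    have hA' : A.derivative = P.derivative + B + X * B.derivative := by
      have hA : A = P + X * B := by rw [hPdef]; ring
      rw [hA, derivative_add, derivative_mul, derivative_X]; ring
    rw [hA'] at hderi
    simp only [eval_add, eval_mul, eval_X] at hderi
    rw [hAi] at hderi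
    have hm0 : ((m i : ℕ) : ℂ) ≠ 0 := Nat.cast_ne_zero.mpr (m i).ne_zero
    have h1 : (P.derivative.eval (r i) + B.eval (r i) + r i * B.derivative.eval (r i)) *
          B.eval (r i) - r i * B.eval (r i) * B.derivative.eval (r i)
        = (1 - 1 / ((m i : ℕ) : ℂ)) * (B.eval (r i)) ^ 2 := by
      rw [← hderi]; field_simp
    have h2 : ((m i : ℕ) : ℂ) * (P.derivative.eval (r i) * B.eval (r i))
        + (B.eval (r i)) ^ 2 = 0 := by
      have h3 := congrArg (fun t => ((m i : ℕ) : ℂ) * t) h1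
      field_simp at h3
      linear_combination (B.eval (r i)) * h3
    apply mul_right_cancel₀ hBi
    linear_combination h2
  set S : ℂ[X] := ∑ i : Fin d, C ((m i : ℕ) : ℂ) *
      ∏ j ∈ Finset.univ.erase i, (X - C (r j)) with hSdef
  have hprod_erase_eval : ∀ i k : Fin d, i ≠ k →
      (∏ j ∈ Finset.univ.erase k, (X - C (r j))).eval (r i) = 0 := by
    intro i k hik
    rw [eval_prod]
    apply Finset.prod_eq_zero (Finset.mem_erase.mpr ⟨hik, Finset.mem_univ i⟩)
    simp
  have hSeval : ∀ i, S.eval (r i) = ((m i : ℕ) : ℂ) *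
      (∏ j ∈ Finset.univ.erase i, (X - C (r j))).eval (r i) := by
    intro i
    rw [hSdef, eval_finset_sum, Finset.sum_eq_single i]
    · rw [eval_mul, eval_C]
    · intro k _ hki
      rw [eval_mul, hprod_erase_eval i k (Ne.symm hki), mul_zero]
    · intro h; exact absurd (Finset.mem_univ i) h
  have hM' : derivative M = ∑ i : Fin d, ∏ j ∈ Finset.univ.erase i, (X - C (r j)) := by
    rw [hMdef, derivative_finset_prod]
    apply Finset.sum_congr rfl
    intro i _
    rw [derivative_sub, derivative_X, derivative_C, sub_zero, mul_one]
  have hM'eval : ∀ i, M.derivative.eval (r i) =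
      (∏ j ∈ Finset.univ.erase i, (X - C (r j))).eval (r i) := by
    intro i
    rw [hM', eval_finset_sum, Finset.sum_eq_single i]
    · intro k _ hki
      exact hprod_erase_eval i k (Ne.symm hki)
    · intro h; exact absurd (Finset.mem_univ i) h
  have hP'eval : ∀ i, P.derivative.eval (r i) =
      c * (∏ j ∈ Finset.univ.erase i, (X - C (r j))).eval (r i) := by
    intro i
    rw [hPc, derivative_mul, derivative_C, zero_mul, zero_add, eval_mul, eval_C, hM'eval i]
  have hBS : B = -(C c * S) := by
    have hzero : B + C c * S = 0 := by
      apply eq_zero_of_natDegree_lt_card_of_eval_eq_zero (B + C c * S) hrinj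
      · intro i
        rw [eval_add, eval_mul, eval_C, hSeval i, hBP' i, hP'eval i]
        ring
      · have hBnd : B.natDegree < d := by omega
        have hSnd : S.natDegree ≤ d - 1 := by
          rw [hSdef]
          apply Polynomial.natDegree_sum_le_of_forall_le
          intro i _
          apply (natDegree_mul_le).trans
          rw [natDegree_C]
          have hpr : (∏ j ∈ Finset.univ.erase i, (X - C (r j))).natDegree = d - 1 := by
            rw [natDegree_prod _ _ fun j _ => X_sub_C_ne_zero (r j)]
            simp [Finset.card_erase_of_mem]
          omega
        have h4 : (B + C c * S).natDegree < d := by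
          apply lt_of_le_of_lt (natDegree_add_le _ _)
          have h5 : (C c * S).natDegree ≤ d - 1 := (natDegree_mul_le).trans (by
            rw [natDegree_C]; omega)
          omega
        simpa using h4
    linear_combination hzero
  have hQ' : derivative Q = ∑ i : Fin d,
      (∏ j ∈ Finset.univ.erase i, (X - C (r j)) ^ (m j : ℕ)) *
        (C ((m i : ℕ) : ℂ) * (X - C (r i)) ^ ((m i : ℕ) - 1)) := by
    rw [hQdef, derivative_finset_prod]
    apply Finset.sum_congr rfl
    intro i _
    rw [derivative_pow, derivative_sub, derivative_X, derivative_C, sub_zero, mul_one]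
  have hMQ' : M * derivative Q = S * Q := by
    rw [hQ', Finset.mul_sum, hSdef, Finset.sum_mul]
    apply Finset.sum_congr rfl
    intro i _
    obtain ⟨k, hk⟩ : ∃ k, (m i : ℕ) = k + 1 := ⟨(m i : ℕ) - 1, by have := (m i).pos; omega⟩
    have hMsplit : M = (X - C (r i)) * ∏ j ∈ Finset.univ.erase i, (X - C (r j)) := by
      rw [hMdef, ← Finset.mul_prod_erase Finset.univ _ (Finset.mem_univ i)]
    have hQsplit : Q = (X - C (r i)) ^ (m i : ℕ) *
        ∏ j ∈ Finset.univ.erase i, (X - C (r j)) ^ (m j : ℕ) := by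
      rw [hQdef, ← Finset.mul_prod_erase Finset.univ _ (Finset.mem_univ i)]
    rw [hMsplit, hQsplit, hk]
    simp only [Nat.add_sub_cancel]
    ring
  have hmain : P * derivative Q = -(B * Q) := by
    rw [hPc, hBS]
    calc C c * M * derivative Q = C c * (M * derivative Q) := by ring
    _ = C c * (S * Q) := by rw [hMQ']
    _ = -(-(C c * S) * Q) := by ring
  refine ⟨Q, hQd, ?_⟩
  intro z hBz hQ'z
  have hev := congrArg (eval z) hmain
  simp only [eval_mul, eval_neg] at hev
  have hAz : A.eval z = P.eval z + z * B.eval z := by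
    rw [hPdef]; simp only [eval_sub, eval_mul, eval_X]; ring
  rw [hAz]
  field_simp
  linear_combination hev

/-- Head's theorem: a rational map `ĝ = A/B` of degree `d ≥ 2` is (the reduction of) a Newton
map of a polynomial `Q` of degree `≥ d` if and only if `ĝ` fixes `∞` (i.e. `deg B < deg A`)
and has `d` distinct finite fixed points `r₁, …, r_d` whose multipliers are of the form
`1 - 1/nᵢ` with `nᵢ` a positive integer. -/
theorem stmt12 (d : ℕ) (hd : 2 ≤ d) (A B : ℂ[X]) (hcop : IsCoprime A B)
    (hdeg : max A.natDegree B.natDegree = d) :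
    (∃ Q : ℂ[X], d ≤ Q.natDegree ∧
        ∀ z : ℂ, B.eval z ≠ 0 → Q.derivative.eval z ≠ 0 →
          A.eval z / B.eval z = z - Q.eval z / Q.derivative.eval z)
      ↔
    (B.natDegree < A.natDegree ∧
      ∃ (r : Fin d → ℂ) (m : Fin d → ℕ+), Function.Injective r ∧
        ∀ i, B.eval (r i) ≠ 0 ∧ A.eval (r i) / B.eval (r i) = r i ∧
          deriv (fun z => A.eval z / B.eval z) (r i) = 1 - 1 / ((m i : ℕ) : ℂ)) := by
  constructor
  · rintro ⟨Q, hdQ, hpt⟩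
    exact forward_dir d hd A B hcop hdeg Q hdQ hpt
  · rintro ⟨hBA, r, m, hrinj, hfix⟩
    exact backward_dir d hd A B hcop hdeg hBA r m hrinj hfix
end

section
/- Let D ⊂ ℂ be an open disk (in the spherical metric) around a point z_0, let f̂ be holomorphic and injective on a neighborhood of the closure of D with closure(D) ⊂ f̂(D), and let f_n be a sequence of holomorphic maps converging uniformly to f̂ on a neighborhood of closure(D). Then for all sufficiently large n and every connected component D' of f_n^{-1}(D) one has either closure(D') ⊆ D or closure(D') ∩ closure(D) = ∅. -/
open Filter

/-- Separation of preimage components under perturbation: if `f̂` is holomorphic and injective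
near the closure of a disk `D` with `closure D ⊆ f̂(D)`, and `f_n → f̂` uniformly near
`closure D`, then for all large `n` each connected component `D'` of `f_n⁻¹(D)` (within the
common domain `U`) satisfies either `closure D' ⊆ D` or `closure D' ∩ closure D = ∅`. -/
theorem stmt14 (z₀ : ℂ) (R : ℝ) (hR : 0 < R) (U : Set ℂ) (hU : IsOpen U)
    (hDU : closure (Metric.ball z₀ R) ⊆ U)
    (fhat : ℂ → ℂ) (f : ℕ → ℂ → ℂ)
    (hfa : AnalyticOnNhd ℂ fhat U) (hinj : Set.InjOn fhat U)
    (hexp : closure (Metric.ball z₀ R) ⊆ fhat '' Metric.ball z₀ R)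
    (hfn : ∀ n, AnalyticOnNhd ℂ (f n) U)
    (hconv : TendstoUniformlyOn f fhat atTop U) :
    ∀ᶠ n in atTop, ∀ x ∈ U, f n x ∈ Metric.ball z₀ R →
      closure (connectedComponentIn (U ∩ f n ⁻¹' Metric.ball z₀ R) x) ⊆ Metric.ball z₀ R ∨
      closure (connectedComponentIn (U ∩ f n ⁻¹' Metric.ball z₀ R) x) ∩
        closure (Metric.ball z₀ R) = ∅ := by
  have hclB : closure (Metric.ball z₀ R) = Metric.closedBall z₀ R :=
    closure_ball z₀ hR.ne'
  have hBU : Metric.ball z₀ R ⊆ U := fun z hz => hDU (subset_closure hz)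
  have hCBU : Metric.closedBall z₀ R ⊆ U := by rw [← hclB]; exact hDU
  have hKU : Metric.sphere z₀ R ⊆ U := fun z hz => hCBU (Metric.sphere_subset_closedBall hz)
  -- `fhat` maps the sphere outside the closed ball
  have hsep : ∀ z ∈ Metric.sphere z₀ R, fhat z ∉ Metric.closedBall z₀ R := by
    intro z hz hmem
    rw [← hclB] at hmem
    obtain ⟨w, hw, hwz⟩ := hexp hmem
    have hweq : w = z := hinj (hBU hw) (hKU hz) hwz
    rw [hweq] at hw
    rw [Metric.mem_ball, Metric.mem_sphere.mp hz] at hw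
    exact lt_irrefl R hw
  -- minimal distance δ from `fhat (sphere)` to the closed ball
  obtain ⟨zm, hzm, hmin⟩ := (isCompact_sphere z₀ R).exists_isMinOn
    (NormedSpace.sphere_nonempty.mpr hR.le)
    ((Metric.continuous_infDist_pt (Metric.closedBall z₀ R)).comp_continuousOn
      (hfa.continuousOn.mono hKU))
  set δ := Metric.infDist (fhat zm) (Metric.closedBall z₀ R) with hδdef
  have hδpos : 0 < δ :=
    (Metric.isClosed_closedBall.notMem_iff_infDist_pos
      ⟨z₀, Metric.mem_closedBall_self hR.le⟩).mp (hsep zm hzm)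
  have hev := (Metric.tendstoUniformlyOn_iff.mp hconv) (δ / 2) (half_pos hδpos)
  filter_upwards [hev] with n hn
  intro x hxU hfx
  -- for this n, `f n` also maps the sphere outside the closed ball
  have hfnK : ∀ z ∈ Metric.sphere z₀ R, f n z ∉ Metric.closedBall z₀ R := by
    intro z hz hmem
    have h1 : δ ≤ Metric.infDist (fhat z) (Metric.closedBall z₀ R) := isMinOn_iff.mp hmin z hz
    have h2 : Metric.infDist (fhat z) (Metric.closedBall z₀ R) ≤ dist (fhat z) (f n z) :=
      Metric.infDist_le_dist_of_mem hmem
    have h3 := hn z (hKU hz)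
    linarith
  set S := U ∩ f n ⁻¹' Metric.ball z₀ R with hS
  set D' := connectedComponentIn S x with hD'
  have hD'S : D' ⊆ S := connectedComponentIn_subset S x
  -- the closure of D' avoids the sphere
  have hD'cl : ∀ z ∈ closure D', z ∉ Metric.sphere z₀ R := by
    intro z hzcl hzK
    have hzU : z ∈ U := hKU hzK
    have hc : ContinuousWithinAt (f n) D' z :=
      ((hfn n z hzU).continuousAt).continuousWithinAt
    have himg : f n z ∈ closure (f n '' D') := hc.mem_closure_image hzcl
    have hsub : f n '' D' ⊆ Metric.ball z₀ R := by
      rintro _ ⟨w, hw, rfl⟩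
      exact (hD'S hw).2
    have : f n z ∈ Metric.closedBall z₀ R := by
      rw [← hclB]
      exact closure_mono hsub himg
    exact hfnK z hzK this
  -- D' lies in the union of ball and complement of closed ball
  have hsuv : D' ⊆ Metric.ball z₀ R ∪ (Metric.closedBall z₀ R)ᶜ := by
    intro z hz
    by_cases hcb : z ∈ Metric.closedBall z₀ R
    · left
      rw [Metric.mem_ball]
      rcases lt_or_eq_of_le (Metric.mem_closedBall.mp hcb) with h | h
      · exact h
      · exact absurd (Metric.mem_sphere.mpr h) (hD'cl z (subset_closure hz))
    · exact Or.inr hcb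
  have hdisj : Disjoint (Metric.ball z₀ R) (Metric.closedBall z₀ R)ᶜ :=
    Set.disjoint_compl_right_iff_subset.mpr Metric.ball_subset_closedBall
  rcases (isPreconnected_connectedComponentIn).subset_or_subset Metric.isOpen_ball
      Metric.isClosed_closedBall.isOpen_compl hdisj hsuv with hcase | hcase
  · -- D' ⊆ ball, hence closure D' ⊆ closed ball minus sphere = ball
    left
    intro z hz
    have hzc : z ∈ Metric.closedBall z₀ R := by
      rw [← hclB]; exact closure_mono hcase hz
    rw [Metric.mem_ball]
    rcases lt_or_eq_of_le (Metric.mem_closedBall.mp hzc) with h | h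
    · exact h
    · exact absurd (Metric.mem_sphere.mpr h) (hD'cl z hz)
  · -- D' ⊆ (closed ball)ᶜ, hence closure D' ∩ closed ball ⊆ sphere = ∅
    right
    rw [hclB]
    ext z
    simp only [Set.mem_inter_iff, Set.mem_empty_iff_false, iff_false, not_and]
    intro hz hzc
    have hzB : z ∉ Metric.ball z₀ R := by
      have : closure D' ⊆ (Metric.ball z₀ R)ᶜ := by
        apply closure_minimal _ Metric.isOpen_ball.isClosed_compl
        exact fun w hw hwB => hcase hw (Metric.ball_subset_closedBall hwB)
      exact this hz
    have : z ∈ Metric.sphere z₀ R := by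
      rw [Metric.mem_sphere]
      rcases lt_or_eq_of_le (Metric.mem_closedBall.mp hzc) with h | h
      · exact absurd (Metric.mem_ball.mpr h) hzB
      · exact h
    exact hD'cl z hz this
end

section
/- Let f_n be a sequence of rational maps of degree d ≥ 2 converging semi-algebraically to f = H_f · f̂ with deg f̂ ≥ 1, and let 𝒪_n be a periodic cycle of f_n of period m ≥ 1 such that the sets 𝒪_n converge in the Hausdorff metric to a finite set 𝒪 ⊂ ℙ¹ with 𝒪 ∩ Hole(f) = ∅. Then 𝒪 is a periodic cycle of f̂ of some period q with q dividing m. Moreover, if each 𝒪_n is attracting then 𝒪 is non-repelling (the multiplier of f̂^q along 𝒪, raised to the power m/q, has modulus at most 1), and if q < m then 𝒪 is parabolic (that multiplier is a root of unity). -/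
open Polynomial Filter Finset

private lemma tendsto_eval_aux (D : ℕ) (p : ℕ → ℂ[X]) (P : ℂ[X])
    (hdeg : ∀ n, (p n).natDegree ≤ D) (hP : P.natDegree ≤ D)
    (hco : ∀ k, Tendsto (fun n => (p n).coeff k) atTop (nhds (P.coeff k)))
    (z : ℕ → ℂ) (z0 : ℂ) (hz : Tendsto z atTop (nhds z0)) :
    Tendsto (fun n => (p n).eval (z n)) atTop (nhds (P.eval z0)) := by
  have h1 : ∀ n, (p n).eval (z n) = ∑ k ∈ range (D+1), (p n).coeff k * (z n) ^ k :=
    fun n => eval_eq_sum_range' (Nat.lt_succ_of_le (hdeg n)) _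
  rw [show P.eval z0 = ∑ k ∈ range (D+1), P.coeff k * z0 ^ k from
    eval_eq_sum_range' (Nat.lt_succ_of_le hP) _]
  simp only [h1]
  exact tendsto_finset_sum _ (fun k _ => (hco k).mul (hz.pow k))

private noncomputable def phiP (D : ℕ) (P : ℂ[X]) (x y : ℂ) : ℂ :=
  ∑ k ∈ Finset.range (D+1), P.coeff k * ∑ l ∈ Finset.range k, y ^ l * x ^ (k - 1 - l)

private lemma phiP_spec (D : ℕ) (P : ℂ[X]) (hP : P.natDegree ≤ D) (x y : ℂ) :
    (y - x) * phiP D P x y = P.eval y - P.eval x := by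
  rw [eval_eq_sum_range' (Nat.lt_succ_of_le hP) x, eval_eq_sum_range' (Nat.lt_succ_of_le hP) y,
    ← Finset.sum_sub_distrib, phiP, Finset.mul_sum]
  refine Finset.sum_congr rfl fun k _ => ?_
  have h := geom_sum₂_mul y x k
  calc (y - x) * (P.coeff k * ∑ l ∈ Finset.range k, y ^ l * x ^ (k - 1 - l))
      = P.coeff k * ((∑ l ∈ Finset.range k, y ^ l * x ^ (k - 1 - l)) * (y - x)) := by ring
    _ = P.coeff k * (y ^ k - x ^ k) := by rw [h]
    _ = P.coeff k * y ^ k - P.coeff k * x ^ k := by ring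

private lemma phiP_diag (D : ℕ) (P : ℂ[X]) (hP : P.natDegree ≤ D) (p : ℂ) :
    phiP D P p p = P.derivative.eval p := by
  have hd : (derivative P).natDegree < D + 1 :=
    Nat.lt_succ_of_le ((natDegree_derivative_le P).trans ((Nat.sub_le _ _).trans hP))
  rw [eval_eq_sum_range' hd]
  have h1 : ∀ k : ℕ, (∑ l ∈ Finset.range k, p ^ l * p ^ (k - 1 - l)) = (k : ℂ) * p ^ (k-1) := by
    intro k
    have : ∀ l ∈ Finset.range k, p ^ l * p ^ (k - 1 - l) = p ^ (k - 1) := by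
      intro l hl
      rw [Finset.mem_range] at hl
      rw [← pow_add]
      congr 1
      omega
    rw [Finset.sum_congr rfl this, Finset.sum_const, Finset.card_range, nsmul_eq_mul]
  unfold phiP
  simp only [h1, coeff_derivative]
  rw [Finset.sum_range_succ' (fun k => P.coeff k * ((k:ℂ) * p ^ (k-1))) D,
      Finset.sum_range_succ]
  have hz : P.coeff (D + 1) = 0 := coeff_eq_zero_of_natDegree_lt (Nat.lt_succ_of_le hP)
  simp [hz]
  refine Finset.sum_congr rfl fun k _ => ?_
  push_cast
  ring

private lemma tendsto_phiP (D : ℕ) (p : ℕ → ℂ[X]) (P : ℂ[X])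
    (hco : ∀ k, Tendsto (fun n => (p n).coeff k) atTop (nhds (P.coeff k)))
    (a b : ℕ → ℂ) (a0 b0 : ℂ) (ha : Tendsto a atTop (nhds a0)) (hb : Tendsto b atTop (nhds b0)) :
    Tendsto (fun n => phiP D (p n) (a n) (b n)) atTop (nhds (phiP D P a0 b0)) := by
  unfold phiP
  exact tendsto_finset_sum _ fun k _ => (hco k).mul
    (tendsto_finset_sum _ fun l _ => (hb.pow l).mul (ha.pow (k-1-l)))

private lemma hasDerivAt_iterate_aux (g : ℂ → ℂ) (x : ℕ → ℂ) (g' : ℕ → ℂ) (k : ℕ)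
    (hx : ∀ i, g (x i) = x (i+1)) (h : ∀ i, HasDerivAt g (g' i) (x i)) :
    HasDerivAt (g^[k]) (∏ i ∈ Finset.range k, g' i) (x 0) := by
  have hit : ∀ t, g^[t] (x 0) = x t := by
    intro t
    induction t with
    | zero => simp
    | succ t ih => rw [Function.iterate_succ_apply', ih, hx]
  induction k with
  | zero => simpa using hasDerivAt_id (x 0)
  | succ k ih =>
    rw [Function.iterate_succ']
    have hk : HasDerivAt g (g' k) (g^[k] (x 0)) := by rw [hit]; exact h k
    have := hk.comp (x 0) ih
    have e : ∏ i ∈ Finset.range (k+1), g' i = g' k * ∏ i ∈ Finset.range k, g' i := by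
      rw [Finset.prod_range_succ, mul_comm]
    rw [e]; exact this

private lemma prod_periodic_pow (g : ℕ → ℂ) (q : ℕ) (hper : ∀ i, g (i + q) = g i) (a : ℕ) :
    ∏ i ∈ Finset.range (q * a), g i = (∏ i ∈ Finset.range q, g i) ^ a := by
  have key : ∀ a i, g (q * a + i) = g i := by
    intro a
    induction a with
    | zero => simp
    | succ a ih =>
      intro i
      rw [Nat.mul_succ, show q * a + q + i = q * a + i + q by omega, hper, ih]
  induction a with
  | zero => simp
  | succ a ih =>
    rw [Nat.mul_succ, Finset.prod_range_add, ih, pow_succ]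
    congr 1
    exact Finset.prod_congr rfl fun i _ => key a i

/-- Limits of periodic cycles of degenerating rational maps: if degree-`d` rational maps
`f_n = A_n/B_n` converge semi-algebraically to `f = H·f̂` with `deg f̂ ≥ 1`, and `𝒪_n` is an
`m`-cycle of `f_n` converging to a finite set `𝒪` avoiding the holes of `f` (and the poles of
`f̂`), then `𝒪` is a `q`-cycle of `f̂` with `q ∣ m`; if the `𝒪_n` are attracting then `𝒪` is
non-repelling, and if `q < m` then `𝒪` is parabolic (its multiplier is a root of unity). -/
theorem stmt17 (d : ℕ) (hd : 2 ≤ d)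
    (An Bn : ℕ → ℂ[X])
    (hdegn : ∀ n, max (An n).natDegree (Bn n).natDegree = d)
    (hcopn : ∀ n, IsCoprime (An n) (Bn n))
    (H Ahat Bhat : ℂ[X]) (hcop : IsCoprime Ahat Bhat)
    (hdeghat : 1 ≤ max Ahat.natDegree Bhat.natDegree)
    (c : ℕ → ℂ) (hc : ∀ n, c n ≠ 0)
    (hconvA : ∀ k, Tendsto (fun n => c n * (An n).coeff k) atTop (nhds ((H * Ahat).coeff k)))
    (hconvB : ∀ k, Tendsto (fun n => c n * (Bn n).coeff k) atTop (nhds ((H * Bhat).coeff k)))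
    (m : ℕ) (hm : 1 ≤ m)
    (fn : ℕ → ℂ → ℂ) (hfn : ∀ n z, fn n z = (An n).eval z / (Bn n).eval z)
    (fhat : ℂ → ℂ) (hfhat : ∀ z, fhat z = Ahat.eval z / Bhat.eval z)
    (orb : ℕ → ZMod m → ℂ) (o : ZMod m → ℂ)
    (hcyc : ∀ n i, fn n (orb n i) = orb n (i + 1))
    (hinj : ∀ n, Function.Injective (orb n))
    (hlim : ∀ i, Tendsto (fun n => orb n i) atTop (nhds (o i)))
    (hhole : ∀ i, H.eval (o i) ≠ 0)
    (hpole : ∀ i, Bhat.eval (o i) ≠ 0) :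
    (∀ i, fhat (o i) = o (i + 1)) ∧
    ∃ q : ℕ, 1 ≤ q ∧ q ∣ m ∧ (Set.range o).ncard = q ∧
      ((∀ n, ‖deriv ((fn n)^[m]) (orb n 0)‖ < 1) → ‖deriv (fhat^[m]) (o 0)‖ ≤ 1) ∧
      (q < m → ∃ k : ℕ+, (deriv (fhat^[q]) (o 0)) ^ (k : ℕ) = 1) := by
  haveI : NeZero m := ⟨by omega⟩
  set P : ℂ[X] := H * Ahat with hPdef
  set Q : ℂ[X] := H * Bhat with hQdef
  have hAnd : ∀ n, (An n).natDegree ≤ d := fun n => (hdegn n) ▸ le_max_left _ _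
  have hBnd : ∀ n, (Bn n).natDegree ≤ d := fun n => (hdegn n) ▸ le_max_right _ _
  set Pn : ℕ → ℂ[X] := fun n => c n • An n with hPndef
  set Qn : ℕ → ℂ[X] := fun n => c n • Bn n with hQndef
  have hPnd : ∀ n, (Pn n).natDegree ≤ d := fun n => (natDegree_smul_le _ _).trans (hAnd n)
  have hQnd : ∀ n, (Qn n).natDegree ≤ d := fun n => (natDegree_smul_le _ _).trans (hBnd n)
  have hcoP : ∀ k, Tendsto (fun n => (Pn n).coeff k) atTop (nhds (P.coeff k)) := by
    intro k; simpa [Pn, coeff_smul, smul_eq_mul] using hconvA k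
  have hcoQ : ∀ k, Tendsto (fun n => (Qn n).coeff k) atTop (nhds (Q.coeff k)) := by
    intro k; simpa [Qn, coeff_smul, smul_eq_mul] using hconvB k
  have hPd : P.natDegree ≤ d := by
    rw [natDegree_le_iff_coeff_eq_zero]
    intro N hN
    refine tendsto_nhds_unique (hcoP N) ?_
    have h0 : ∀ n, (Pn n).coeff N = 0 := fun n => by
      simp [Pn, coeff_smul, coeff_eq_zero_of_natDegree_lt (lt_of_le_of_lt (hAnd n) hN)]
    simpa [h0] using (tendsto_const_nhds : Tendsto (fun _ : ℕ => (0:ℂ)) atTop _)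
  have hQd : Q.natDegree ≤ d := by
    rw [natDegree_le_iff_coeff_eq_zero]
    intro N hN
    refine tendsto_nhds_unique (hcoQ N) ?_
    have h0 : ∀ n, (Qn n).coeff N = 0 := fun n => by
      simp [Qn, coeff_smul, coeff_eq_zero_of_natDegree_lt (lt_of_le_of_lt (hBnd n) hN)]
    simpa [h0] using (tendsto_const_nhds : Tendsto (fun _ : ℕ => (0:ℂ)) atTop _)
  have hQo : ∀ i, Q.eval (o i) ≠ 0 := fun i => by
    rw [hQdef, eval_mul]; exact mul_ne_zero (hhole i) (hpole i)
  have hEvalP : ∀ i, Tendsto (fun n => (Pn n).eval (orb n i)) atTop (nhds (P.eval (o i))) :=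
    fun i => tendsto_eval_aux d Pn P hPnd hPd hcoP _ _ (hlim i)
  have hEvalQ : ∀ i, Tendsto (fun n => (Qn n).eval (orb n i)) atTop (nhds (Q.eval (o i))) :=
    fun i => tendsto_eval_aux d Qn Q hQnd hQd hcoQ _ _ (hlim i)
  have hQne : ∀ i, ∀ᶠ n in atTop, (Qn n).eval (orb n i) ≠ 0 :=
    fun i => (hEvalQ i).eventually_ne (hQo i)
  have hfnPQ : ∀ n z, fn n z = (Pn n).eval z / (Qn n).eval z := by
    intro n z
    rw [hfn]
    simp only [Pn, Qn, eval_smul, smul_eq_mul]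
    rcases eq_or_ne ((Bn n).eval z) 0 with h | h
    · simp [h]
    · rw [mul_div_mul_left _ _ (hc n)]
  -- Part 1 : the cycle relation for fhat
  have hstep : ∀ i, fhat (o i) = o (i + 1) := by
    intro i
    have h1 : Tendsto (fun n => fn n (orb n i)) atTop (nhds (P.eval (o i) / Q.eval (o i))) :=
      (((hEvalP i).div (hEvalQ i) (hQo i))).congr (fun n => (hfnPQ n _).symm)
    have h2 : Tendsto (fun n => fn n (orb n i)) atTop (nhds (o (i + 1))) := by
      have := hlim (i + 1)
      refine this.congr fun n => (hcyc n i).symm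
    have h3 := tendsto_nhds_unique h1 h2
    rw [hfhat, ← h3, hPdef, hQdef, eval_mul, eval_mul, mul_div_mul_left _ _ (hhole i)]
  -- shifting along the cycle
  have hshiftN : ∀ (t : ℕ) (i j : ZMod m), o i = o j → o (i + t) = o (j + t) := by
    intro t
    induction t with
    | zero => intro i j h; simpa using h
    | succ t ih =>
      intro i j h
      have h' := ih i j h
      have e1 : (i + ((t:ℕ)+1 : ℕ) : ZMod m) = (i + t) + 1 := by push_cast; ring
      have e2 : (j + ((t:ℕ)+1 : ℕ) : ZMod m) = (j + t) + 1 := by push_cast; ring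
      rw [e1, e2, ← hstep, ← hstep, h']
  have hcast : ∀ x : ZMod m, ∃ t : ℕ, (t : ZMod m) = x := fun x =>
    ⟨x.val, ZMod.natCast_rightInverse x⟩
  have hshift : ∀ (i j t : ZMod m), o i = o j → o (i + t) = o (j + t) := by
    intro i j t h
    obtain ⟨s, rfl⟩ := hcast t
    exact hshiftN s i j h
  -- q : the exact period of o
  have hex : ∃ t : ℕ, 0 < t ∧ o (t : ZMod m) = o 0 :=
    ⟨m, by omega, by rw [ZMod.natCast_self]⟩
  set q := Nat.find hex with hqdef
  obtain ⟨hq0, hqo⟩ : 0 < q ∧ o (q : ZMod m) = o 0 := Nat.find_spec hex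
  have hqmin : ∀ t : ℕ, 0 < t → t < q → o (t : ZMod m) ≠ o 0 := by
    intro t ht hlt hcon
    exact Nat.find_min hex hlt ⟨ht, hcon⟩
  have hperiod : ∀ x : ZMod m, o (x + q) = o x := by
    intro x
    have := hshift (q : ZMod m) 0 x hqo
    simpa [add_comm] using this
  have hperN : ∀ (a : ℕ) (x : ZMod m), o (x + (q * a : ℕ)) = o x := by
    intro a
    induction a with
    | zero => simp
    | succ a ih =>
      intro x
      have e : ((q * (a+1) : ℕ) : ZMod m) = ((q * a : ℕ) : ZMod m) + (q : ZMod m) := by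
        push_cast; ring
      rw [e, ← add_assoc, hperiod, ih]
  have hdvd : q ∣ m := by
    rcases Nat.eq_zero_or_pos (m % q) with h | h
    · exact Nat.dvd_of_mod_eq_zero h
    · exfalso
      apply hqmin (m % q) h (Nat.mod_lt _ hq0)
      have h2 := hperN (m / q) ((m % q : ℕ) : ZMod m)
      have e : (((m % q : ℕ) : ZMod m) + ((q * (m / q) : ℕ) : ZMod m)) = 0 := by
        rw [← Nat.cast_add, show m % q + q * (m / q) = m from Nat.mod_add_div m q,
          ZMod.natCast_self]
      rw [e] at h2
      exact h2.symm
  -- representative reduction : o ↑t = o ↑(t % q)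
  have hred : ∀ t : ℕ, o (t : ZMod m) = o ((t % q : ℕ) : ZMod m) := by
    intro t
    have h2 := hperN (t / q) ((t % q : ℕ) : ZMod m)
    have e : (((t % q : ℕ) : ZMod m) + ((q * (t / q) : ℕ) : ZMod m)) = (t : ZMod m) := by
      rw [← Nat.cast_add, show t % q + q * (t / q) = t from Nat.mod_add_div t q]
    rw [← Nat.cast_add] at h2
    rw [← Nat.cast_add] at e
    rw [e] at h2
    exact h2
  have hcard : (Set.range o).ncard = q := by
    classical
    have himg : Set.range o = ↑((Finset.range q).image (fun t : ℕ => o (t : ZMod m))) := by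
      ext z
      simp only [Set.mem_range, Finset.coe_image, Set.mem_image, Finset.mem_coe,
        Finset.mem_range]
      constructor
      · rintro ⟨x, rfl⟩
        obtain ⟨t, rfl⟩ := hcast x
        exact ⟨t % q, Nat.mod_lt _ hq0, (hred t).symm⟩
      · rintro ⟨t, _, rfl⟩
        exact ⟨_, rfl⟩
    rw [himg, Set.ncard_coe_finset, Finset.card_image_of_injOn, Finset.card_range]
    intro s hs t ht hst
    simp only [Finset.coe_range, Set.mem_Iio] at hs ht
    by_contra hne
    rcases Nat.lt_or_ge s t with hlt | hge
    · refine hqmin (t - s) (by omega) (by omega) ?_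
      have := hshift (t : ZMod m) (s : ZMod m) (-(s : ZMod m)) hst.symm
      have e : ((t - s : ℕ) : ZMod m) = (t : ZMod m) + (-(s:ZMod m)) := by
        rw [Nat.cast_sub hlt.le]; ring
      rw [e]
      simpa using this
    · have hlt : t < s := by omega
      refine hqmin (s - t) (by omega) (by omega) ?_
      have := hshift (s : ZMod m) (t : ZMod m) (-(t : ZMod m)) hst
      have e : ((s - t : ℕ) : ZMod m) = (s : ZMod m) + (-(t:ZMod m)) := by
        rw [Nat.cast_sub hlt.le]; ring
      rw [e]
      simpa using this
  -- multiplier data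
  set lam : ZMod m → ℂ := fun i =>
    (Ahat.derivative.eval (o i) * Bhat.eval (o i) - Ahat.eval (o i) * Bhat.derivative.eval (o i))
      / (Bhat.eval (o i)) ^ 2 with hlamdef
  have hfhatD : ∀ i : ZMod m, HasDerivAt fhat (lam i) (o i) := by
    intro i
    have h := (Ahat.hasDerivAt (o i)).div (Bhat.hasDerivAt (o i)) (hpole i)
    have e : fhat = fun z => Ahat.eval z / Bhat.eval z := funext hfhat
    rw [e]
    exact h
  have hlamQ : ∀ i : ZMod m,
      (P.derivative.eval (o i) * Q.eval (o i) - P.eval (o i) * Q.derivative.eval (o i))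
        / (Q.eval (o i)) ^ 2 = lam i := by
    intro i
    have hH := hhole i
    have hB := hpole i
    simp only [hPdef, hQdef, derivative_mul, eval_mul, eval_add, hlamdef]
    field_simp
    ring
  -- iterate values and derivatives of fhat
  have hoval : ∀ t : ℕ, fhat^[t] (o 0) = o (t : ZMod m) := by
    intro t
    induction t with
    | zero => simp
    | succ t ih =>
      rw [Function.iterate_succ_apply', ih, hstep]
      congr 1
      push_cast
      ring
  have hiterhat : ∀ k : ℕ,
      HasDerivAt (fhat^[k]) (∏ i ∈ Finset.range k, lam ((i : ℕ) : ZMod m)) (o 0) := by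
    intro k
    have := hasDerivAt_iterate_aux fhat (fun t : ℕ => o ((t : ℕ) : ZMod m))
      (fun t : ℕ => lam ((t : ℕ) : ZMod m)) k
      (fun t => by rw [hstep]; congr 1; push_cast; ring)
      (fun t => hfhatD _)
    simpa using this
  -- coefficient convergence for derivatives
  have hcoP' : ∀ k, Tendsto (fun n => ((Pn n).derivative).coeff k) atTop
      (nhds (P.derivative.coeff k)) := by
    intro k
    simp only [coeff_derivative]
    exact (hcoP (k+1)).mul_const _
  have hcoQ' : ∀ k, Tendsto (fun n => ((Qn n).derivative).coeff k) atTop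
      (nhds (Q.derivative.coeff k)) := by
    intro k
    simp only [coeff_derivative]
    exact (hcoQ (k+1)).mul_const _
  have hPnd' : ∀ n, ((Pn n).derivative).natDegree ≤ d :=
    fun n => (natDegree_derivative_le _).trans ((Nat.sub_le _ _).trans (hPnd n))
  have hQnd' : ∀ n, ((Qn n).derivative).natDegree ≤ d :=
    fun n => (natDegree_derivative_le _).trans ((Nat.sub_le _ _).trans (hQnd n))
  have hPd' : P.derivative.natDegree ≤ d :=
    (natDegree_derivative_le _).trans ((Nat.sub_le _ _).trans hPd)
  have hQd' : Q.derivative.natDegree ≤ d :=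
    (natDegree_derivative_le _).trans ((Nat.sub_le _ _).trans hQd)
  have hEvalP' : ∀ i, Tendsto (fun n => ((Pn n).derivative).eval (orb n i)) atTop
      (nhds (P.derivative.eval (o i))) :=
    fun i => tendsto_eval_aux d _ _ hPnd' hPd' hcoP' _ _ (hlim i)
  have hEvalQ' : ∀ i, Tendsto (fun n => ((Qn n).derivative).eval (orb n i)) atTop
      (nhds (Q.derivative.eval (o i))) :=
    fun i => tendsto_eval_aux d _ _ hQnd' hQd' hcoQ' _ _ (hlim i)
  -- pointwise derivative convergence
  have hDconv : ∀ i : ZMod m,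
      Tendsto (fun n => deriv (fn n) (orb n i)) atTop (nhds (lam i)) := by
    intro i
    have hnum : Tendsto (fun n =>
        (((Pn n).derivative).eval (orb n i) * (Qn n).eval (orb n i)
          - (Pn n).eval (orb n i) * ((Qn n).derivative).eval (orb n i))
          / ((Qn n).eval (orb n i)) ^ 2) atTop (nhds (lam i)) := by
      rw [← hlamQ i]
      exact (((hEvalP' i).mul (hEvalQ i)).sub ((hEvalP i).mul (hEvalQ' i))).div
        ((hEvalQ i).pow 2) (pow_ne_zero _ (hQo i))
    refine hnum.congr' ?_
    filter_upwards [hQne i] with n hn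
    have hB : (Bn n).eval (orb n i) ≠ 0 := by
      intro h
      apply hn
      simp [Qn, eval_smul, h]
    have hD : HasDerivAt (fn n)
        (((An n).derivative.eval (orb n i) * (Bn n).eval (orb n i)
          - (An n).eval (orb n i) * (Bn n).derivative.eval (orb n i))
          / ((Bn n).eval (orb n i)) ^ 2) (orb n i) := by
      have h := ((An n).hasDerivAt (orb n i)).div ((Bn n).hasDerivAt (orb n i)) hB
      have e : fn n = fun z => (An n).eval z / (Bn n).eval z := funext (hfn n)
      rw [e]
      exact h
    rw [hD.deriv]  -- wrong direction?  goal: expr_PQ = deriv (fn n) (orb n i)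
    -- after rw [hD.deriv] : goal expr_PQ = expr_AB
    simp only [Pn, Qn, derivative_smul, eval_smul, smul_eq_mul]
    have hcB : c n * (Bn n).eval (orb n i) ≠ 0 := mul_ne_zero (hc n) hB
    rw [div_eq_div_iff (pow_ne_zero 2 hcB) (pow_ne_zero 2 hB)]
    ring
  refine ⟨hstep, q, hq0, hdvd, hcard, ?_, ?_⟩
  -- attracting part
  · intro hattr
    have hallQ : ∀ᶠ n in atTop, ∀ i : ZMod m, (Qn n).eval (orb n i) ≠ 0 :=
      eventually_all.mpr hQne
    have hprodconv : Tendsto (fun n => ∏ i ∈ Finset.range m, deriv (fn n) (orb n ((i:ℕ) : ZMod m)))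
        atTop (nhds (∏ i ∈ Finset.range m, lam ((i:ℕ) : ZMod m))) :=
      tendsto_finset_prod _ fun i _ => hDconv _
    have heq : ∀ᶠ n in atTop, deriv ((fn n)^[m]) (orb n 0)
        = ∏ i ∈ Finset.range m, deriv (fn n) (orb n ((i:ℕ) : ZMod m)) := by
      filter_upwards [hallQ] with n hn
      have hder : ∀ t : ℕ, HasDerivAt (fn n) (deriv (fn n) (orb n ((t:ℕ) : ZMod m)))
          (orb n ((t:ℕ) : ZMod m)) := by
        intro t
        have hB : (Bn n).eval (orb n ((t:ℕ):ZMod m)) ≠ 0 := by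
          intro h
          apply hn ((t:ℕ):ZMod m)
          simp [Qn, eval_smul, h]
        have h := ((An n).hasDerivAt (orb n ((t:ℕ):ZMod m))).div
          ((Bn n).hasDerivAt (orb n ((t:ℕ):ZMod m))) hB
        have e : fn n = (fun z => (An n).eval z) / (fun z => (Bn n).eval z) := funext (hfn n)
        have h2 : HasDerivAt (fn n) _ _ := e ▸ h
        exact h2.deriv ▸ h2
      have hit := hasDerivAt_iterate_aux (fn n) (fun t : ℕ => orb n ((t:ℕ) : ZMod m))
        (fun t : ℕ => deriv (fn n) (orb n ((t:ℕ) : ZMod m))) m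
        (fun t => by rw [hcyc]; congr 1; push_cast; ring)
        hder
      simpa using hit.deriv
    have hfinal : Tendsto (fun n => deriv ((fn n)^[m]) (orb n 0)) atTop
        (nhds (∏ i ∈ Finset.range m, lam ((i:ℕ) : ZMod m))) :=
      hprodconv.congr' (heq.mono fun n h => h.symm)
    have hderm : deriv (fhat^[m]) (o 0) = ∏ i ∈ Finset.range m, lam ((i:ℕ) : ZMod m) :=
      (hiterhat m).deriv
    rw [hderm]
    have hnorm : Tendsto (fun n => ‖deriv ((fn n)^[m]) (orb n 0)‖) atTop
        (nhds ‖∏ i ∈ Finset.range m, lam ((i:ℕ) : ZMod m)‖) := hfinal.norm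
    exact le_of_tendsto hnorm (Eventually.of_forall fun n => (hattr n).le)
  -- parabolic part
  · intro hqm
    set j : ZMod m := (q : ZMod m) with hjdef
    have hj0 : j ≠ 0 := by
      intro h
      have := (ZMod.natCast_eq_zero_iff q m).mp h
      have := Nat.le_of_dvd hq0 this
      omega
    have hoj : ∀ i : ZMod m, o (i + j) = o i := by
      intro i
      have := hshift j 0 i hqo
      simpa [add_comm] using this
    set u : ℕ → ZMod m → ℂ := fun n i => orb n (i + j) - orb n i with hudef
    have hu0 : ∀ n i, u n i ≠ 0 := by
      intro n i
      simp only [hudef]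
      rw [sub_ne_zero]
      intro h
      exact hj0 (by simpa using (add_eq_left).mp (hinj n h))
    have hratio : ∀ i : ZMod m,
        Tendsto (fun n => u n (i+1) / u n i) atTop (nhds (lam i)) := by
      intro i
      have hlimb : Tendsto (fun n => orb n (i + j)) atTop (nhds (o i)) := by
        have := hlim (i + j)
        rwa [hoj i] at this
      have hEvalQb : Tendsto (fun n => (Qn n).eval (orb n (i+j))) atTop
          (nhds (Q.eval (o i))) :=
        tendsto_eval_aux d Qn Q hQnd hQd hcoQ _ _ hlimb
      have hEvalPb : Tendsto (fun n => (Pn n).eval (orb n (i+j))) atTop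
          (nhds (P.eval (o i))) :=
        tendsto_eval_aux d Pn P hPnd hPd hcoP _ _ hlimb
      have hphiP : Tendsto (fun n => phiP d (Pn n) (orb n i) (orb n (i+j))) atTop
          (nhds (P.derivative.eval (o i))) := by
        have := tendsto_phiP d Pn P hcoP _ _ _ _ (hlim i) hlimb
        rwa [phiP_diag d P hPd] at this
      have hphiQ : Tendsto (fun n => phiP d (Qn n) (orb n i) (orb n (i+j))) atTop
          (nhds (Q.derivative.eval (o i))) := by
        have := tendsto_phiP d Qn Q hcoQ _ _ _ _ (hlim i) hlimb
        rwa [phiP_diag d Q hQd] at this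
      have hnum : Tendsto (fun n =>
          (phiP d (Pn n) (orb n i) (orb n (i+j)) * (Qn n).eval (orb n i)
            - (Pn n).eval (orb n i) * phiP d (Qn n) (orb n i) (orb n (i+j)))
            / ((Qn n).eval (orb n i) * (Qn n).eval (orb n (i+j)))) atTop (nhds (lam i)) := by
        have h := ((hphiP.mul (hEvalQ i)).sub ((hEvalP i).mul hphiQ)).div
          ((hEvalQ i).mul hEvalQb) (mul_ne_zero (hQo i) (hQo i))
        rwa [show (P.derivative.eval (o i) * Q.eval (o i)
            - P.eval (o i) * Q.derivative.eval (o i)) / (Q.eval (o i) * Q.eval (o i))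
            = lam i from by rw [← hlamQ i]; ring_nf] at h
      refine hnum.congr' ?_
      have hQneb : ∀ᶠ n in atTop, (Qn n).eval (orb n (i+j)) ≠ 0 :=
        hEvalQb.eventually_ne (hQo i)
      filter_upwards [hQne i, hQneb] with n hQa hQb
      have hba : orb n (i+j) - orb n i ≠ 0 := hu0 n i
      have hfa : fn n (orb n i) = (Pn n).eval (orb n i) / (Qn n).eval (orb n i) := hfnPQ n _
      have hfb : fn n (orb n (i+j)) = (Pn n).eval (orb n (i+j)) / (Qn n).eval (orb n (i+j)) :=
        hfnPQ n _
      have hui1 : u n (i+1) = fn n (orb n (i+j)) - fn n (orb n i) := by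
        simp only [hudef]
        rw [hcyc, hcyc]
        congr 2
        ring
      have s1 := phiP_spec d (Pn n) (hPnd n) (orb n i) (orb n (i+j))
      have s2 := phiP_spec d (Qn n) (hQnd n) (orb n i) (orb n (i+j))
      rw [hui1, hfa, hfb]
      simp only [hudef]
      field_simp
      linear_combination
        ((Qn n).eval (orb n i) * s1 - (Pn n).eval (orb n i) * s2)
    -- telescoping product equals 1
    have htel : ∀ n, ∏ i ∈ Finset.range m, (u n ((i:ℕ) + 1 : ZMod m) / u n ((i:ℕ) : ZMod m)) = 1 := by
      intro n
      rw [Finset.prod_div_distrib]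
      have hprodeq : ∏ i ∈ Finset.range m, u n (((i:ℕ) : ZMod m) + 1)
          = ∏ i ∈ Finset.range m, u n ((i:ℕ) : ZMod m) := by
        have e1 : ∀ i : ℕ, u n (((i:ℕ) : ZMod m) + 1) = u n (((i+1 : ℕ)) : ZMod m) := by
          intro i; congr 1; push_cast; ring
        have key : (∏ i ∈ Finset.range m, u n (((i+1:ℕ)) : ZMod m)) * u n ((0:ℕ) : ZMod m)
            = (∏ i ∈ Finset.range m, u n ((i:ℕ) : ZMod m)) * u n ((m:ℕ) : ZMod m) := by
          rw [← Finset.prod_range_succ' (fun i : ℕ => u n ((i:ℕ) : ZMod m)) m,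
            Finset.prod_range_succ]
        have e2 : u n ((m:ℕ) : ZMod m) = u n ((0:ℕ) : ZMod m) := by
          congr 1
          rw [ZMod.natCast_self]
          norm_num
        rw [e2] at key
        have := mul_right_cancel₀ (hu0 n ((0:ℕ) : ZMod m)) key
        calc ∏ i ∈ Finset.range m, u n (((i:ℕ) : ZMod m) + 1)
            = ∏ i ∈ Finset.range m, u n (((i+1:ℕ)) : ZMod m) :=
              Finset.prod_congr rfl fun i _ => e1 i
          _ = ∏ i ∈ Finset.range m, u n ((i:ℕ) : ZMod m) := this
      rw [hprodeq, div_self]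
      rw [Finset.prod_ne_zero_iff]
      exact fun i _ => hu0 n _
    have hlim1 : Tendsto (fun n => ∏ i ∈ Finset.range m,
        (u n ((i:ℕ) + 1 : ZMod m) / u n ((i:ℕ) : ZMod m))) atTop
        (nhds (∏ i ∈ Finset.range m, lam ((i:ℕ) : ZMod m))) :=
      tendsto_finset_prod _ fun i _ => hratio _
    have hprod1 : ∏ i ∈ Finset.range m, lam ((i:ℕ) : ZMod m) = 1 := by
      refine tendsto_nhds_unique hlim1 ?_
      simpa [htel] using (tendsto_const_nhds : Tendsto (fun _ : ℕ => (1:ℂ)) atTop _)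
    -- periodicity of lam and power structure
    have hlamper : ∀ i : ℕ, lam (((i + q : ℕ)) : ZMod m) = lam ((i:ℕ) : ZMod m) := by
      intro i
      simp only [hlamdef]
      have : o (((i + q : ℕ)) : ZMod m) = o ((i:ℕ) : ZMod m) := by
        have := hperiod ((i:ℕ) : ZMod m)
        rw [← this]
        congr 1
        push_cast
        ring
      rw [this]
    have hmq : q * (m / q) = m := Nat.mul_div_cancel' hdvd
    have hpow : ∏ i ∈ Finset.range m, lam ((i:ℕ) : ZMod m)
        = (∏ i ∈ Finset.range q, lam ((i:ℕ) : ZMod m)) ^ (m / q) := by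
      have h := prod_periodic_pow (fun i : ℕ => lam ((i:ℕ) : ZMod m)) q hlamper (m / q)
      rwa [hmq] at h
    have hderq : deriv (fhat^[q]) (o 0) = ∏ i ∈ Finset.range q, lam ((i:ℕ) : ZMod m) :=
      (hiterhat q).deriv
    have hmqpos : 0 < m / q := Nat.div_pos (Nat.le_of_dvd (by omega) hdvd) hq0
    refine ⟨⟨m / q, hmqpos⟩, ?_⟩
    show (deriv (fhat^[q]) (o 0)) ^ (m / q) = 1
    rw [hderq, ← hpow, hprod1]
end
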